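/- arXiv:1509.05696 — 5 statements merged into one kernel-verified Lean document; each statement's English description precedes it below -/
import Mathlib

section
/- (Theorem 2, Property 3: Laplace Principle) If α₁ ≠ 0, then the transient signal x satisfies lim_{t → ∞} −(1/t) · log|x(t)| = λ₁ (in particular, x(t) ≠ 0 for all sufficiently large t, so the logarithm is eventually well defined). -/
open Filter Real Set

set_option maxHeartbeats 1000000

/-- Theorem 2, Property 3: Laplace Principle: if `α₁ ≠ 0`, then
`lim_{t → ∞} −(1/t) log|x(t)| = λ₁`; in particular `x(t) ≠ 0` for all sufficiently
large `t`, so the logarithm is eventually well defined. -/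
theorem transient_signal_laplace_principle
    (lam : ℕ → ℝ) (hlam_pos : ∀ n, 0 < lam n) (hlam_mono : StrictMono lam)
    (a : ℕ → ℝ) (ha : Summable fun n => |a n|)
    (x : ℝ → ℝ)
    (hx : ∀ t ≥ (0 : ℝ), x t = ∑' n, a n * Real.exp (-lam n * t))
    (ha0 : a 0 ≠ 0) :
    (∀ᶠ t in atTop, x t ≠ 0) ∧
    Tendsto (fun t => -(1 / t) * Real.log |x t|) atTop (nhds (lam 0)) := by
  have haS : Summable fun n => |a (n+1)| := (summable_nat_add_iff 1).mpr ha
  set C : ℝ := ∑' n, |a (n+1)| with hC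
  have hsum : ∀ t : ℝ, 0 ≤ t → Summable (fun n => a n * Real.exp (-lam n * t)) := by
    intro t ht
    apply Summable.of_norm_bounded ha
    intro n
    rw [norm_mul, Real.norm_eq_abs, Real.norm_eq_abs, Real.abs_exp]
    calc |a n| * Real.exp (-lam n * t) ≤ |a n| * 1 := by
          apply mul_le_mul_of_nonneg_left _ (abs_nonneg _)
          exact Real.exp_le_one_iff.mpr (by nlinarith [hlam_pos n])
      _ = |a n| := mul_one _
  -- the tail
  set g : ℝ → ℝ := fun t => ∑' n, a (n+1) * Real.exp (-(lam (n+1) * t)) with hg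
  have hsplit : ∀ t : ℝ, 0 ≤ t → x t = a 0 * Real.exp (-lam 0 * t) + g t := by
    intro t ht
    rw [hx t ht, Summable.tsum_eq_zero_add (hsum t ht)]
    simp only [hg, neg_mul]
  have hgbound : ∀ t : ℝ, 0 ≤ t → |g t| ≤ C * Real.exp (-lam 1 * t) := by
    intro t ht
    have hsum' : Summable (fun n => a (n+1) * Real.exp (-(lam (n+1) * t))) := by
      have := (summable_nat_add_iff 1).mpr (hsum t ht)
      simpa [neg_mul] using this
    have h1 : Summable (fun n => ‖a (n+1) * Real.exp (-(lam (n+1) * t))‖) := hsum'.norm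
    have h2 : Summable (fun n => |a (n+1)| * Real.exp (-(lam (n+1) * t))) := by
      have := hsum'.abs
      simp only [abs_mul, Real.abs_exp, neg_mul] at this
      exact this
    calc |g t| ≤ ∑' n, |a (n+1)| * Real.exp (-(lam (n+1) * t)) := by
          have := norm_tsum_le_tsum_norm h1
          simp only [Real.norm_eq_abs, abs_mul, Real.abs_exp, neg_mul] at this
          exact this
      _ ≤ ∑' n, |a (n+1)| * Real.exp (-lam 1 * t) := by
          apply h2.tsum_le_tsum _ (haS.mul_right _)
          intro n
          apply mul_le_mul_of_nonneg_left _ (abs_nonneg _)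
          apply Real.exp_le_exp.mpr
          have : lam 1 ≤ lam (n+1) := hlam_mono.monotone (by omega)
          nlinarith
      _ = C * Real.exp (-lam 1 * t) := by rw [hC, tsum_mul_right]
  -- h t := x t * exp (lam 0 * t) tends to a 0
  set h : ℝ → ℝ := fun t => x t * Real.exp (lam 0 * t) with hh
  have hha : ∀ t : ℝ, 0 ≤ t → h t - a 0 = g t * Real.exp (lam 0 * t) := by
    intro t ht
    simp only [hh]
    rw [hsplit t ht, add_mul, mul_assoc, ← Real.exp_add]
    have : -lam 0 * t + lam 0 * t = 0 := by ring
    rw [this, Real.exp_zero]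
    ring
  have hexp : Tendsto (fun t : ℝ => C * Real.exp ((lam 0 - lam 1) * t)) atTop (nhds 0) := by
    rw [show (0:ℝ) = C * 0 by ring]
    apply Tendsto.const_mul
    exact Real.tendsto_exp_atBot.comp
      (tendsto_id.const_mul_atTop_of_neg (sub_neg.mpr (hlam_mono (by omega))))
  have hdiff0 : Tendsto (fun t => h t - a 0) atTop (nhds 0) := by
    rw [tendsto_zero_iff_abs_tendsto_zero]
    apply squeeze_zero' (Eventually.of_forall fun t => abs_nonneg _)
      ((eventually_ge_atTop (0:ℝ)).mono fun t ht => ?_) hexp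
    rw [hha t ht, abs_mul, Real.abs_exp]
    calc |g t| * Real.exp (lam 0 * t) ≤ C * Real.exp (-lam 1 * t) * Real.exp (lam 0 * t) :=
          mul_le_mul_of_nonneg_right (hgbound t ht) (Real.exp_pos _).le
      _ = C * Real.exp ((lam 0 - lam 1) * t) := by
          rw [mul_assoc, ← Real.exp_add]; ring_nf
  have htend : Tendsto h atTop (nhds (a 0)) := by
    have := hdiff0.add_const (a 0)
    simpa using this
  -- eventually |h t| > |a 0| / 2 > 0
  have habs : Tendsto (fun t => |h t|) atTop (nhds (|a 0|)) := htend.abs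
  have hev : ∀ᶠ t in atTop, |a 0| / 2 < |h t| :=
    habs.eventually (eventually_gt_nhds (by have := abs_pos.mpr ha0; linarith))
  have hxne : ∀ᶠ t in atTop, x t ≠ 0 := by
    filter_upwards [hev] with t ht
    intro hx0
    simp only [hh, hx0, zero_mul, abs_zero] at ht
    have : (0:ℝ) < |a 0| / 2 := by positivity
    linarith
  refine ⟨hxne, ?_⟩
  -- the log limit
  have hlog : Tendsto (fun t => Real.log |h t|) atTop (nhds (Real.log |a 0|)) :=
    (Real.continuousAt_log (abs_ne_zero.mpr ha0)).tendsto.comp habs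
  have hmain : Tendsto (fun t => lam 0 - (1 / t) * Real.log |h t|) atTop (nhds (lam 0)) := by
    have h0 : Tendsto (fun t : ℝ => (1 / t) * Real.log |h t|) atTop (nhds 0) := by
      have h1 : Tendsto (fun t : ℝ => 1 / t) atTop (nhds 0) := by
        simpa [one_div] using tendsto_inv_atTop_zero
      have := h1.mul hlog
      simpa using this
    have := (tendsto_const_nhds (x := lam 0) (f := atTop)).sub h0
    simpa using this
  apply hmain.congr'
  filter_upwards [hev, eventually_gt_atTop (0:ℝ)] with t ht htpos
  have hhne : h t ≠ 0 := by
    intro h0; rw [h0, abs_zero] at ht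
    have : (0:ℝ) < |a 0| / 2 := by positivity
    linarith
  have hxt : |x t| = |h t| * Real.exp (-lam 0 * t) := by
    have : x t = h t * Real.exp (-lam 0 * t) := by
      simp only [hh]
      rw [mul_assoc, ← Real.exp_add]
      have : lam 0 * t + -lam 0 * t = 0 := by ring
      rw [this, Real.exp_zero, mul_one]
    rw [this, abs_mul, Real.abs_exp]
  rw [hxt, Real.log_mul (abs_ne_zero.mpr hhne) (Real.exp_ne_zero _), Real.log_exp]
  field_simp
  ring
end

section
/- Generalized coefficient isolation (correctness of step 2 of the decomposition algorithm at stage k): for every k ∈ ℕ, the k-th residual x_k(t) := x(t) − ∑_{j=1}^{k−1} α_j e^{-λ_j t} satisfies lim_{t → ∞} e^{λ_k t} · x_k(t) = α_k. -/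
open Filter Real Set

set_option maxHeartbeats 800000 in
/-- Generalized coefficient isolation at stage `k`: the `k`-th residual
`x_k(t) = x(t) − ∑_{j<k} α_j e^{-λ_j t}` satisfies `lim_{t → ∞} e^{λ_k t} x_k(t) = α_k`. -/
theorem transient_signal_generalized_isolation
    (lam : ℕ → ℝ) (hlam_pos : ∀ n, 0 < lam n) (hlam_mono : StrictMono lam)
    (a : ℕ → ℝ) (ha : Summable fun n => |a n|)
    (x : ℝ → ℝ)
    (hx : ∀ t ≥ (0 : ℝ), x t = ∑' n, a n * Real.exp (-lam n * t)) :
    ∀ k : ℕ,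
      Tendsto
        (fun t => Real.exp (lam k * t) *
          (x t - ∑ j ∈ Finset.range k, a j * Real.exp (-lam j * t)))
        atTop (nhds (a k)) := by
  intro k
  set C := ∑' n, |a n| with hC
  have hC0 : 0 ≤ C := tsum_nonneg fun n => abs_nonneg _
  have key : ∀ t ≥ (0:ℝ),
      |Real.exp (lam k * t) * (x t - ∑ j ∈ Finset.range k, a j * Real.exp (-lam j * t)) - a k|
        ≤ C * Real.exp ((lam k - lam (k+1)) * t) := by
    intro t ht
    have hexple : ∀ n : ℕ, |a n * Real.exp (-lam n * t)| ≤ |a n| := by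
      intro n
      rw [abs_mul, Real.abs_exp]
      calc |a n| * Real.exp (-lam n * t) ≤ |a n| * 1 := by
            gcongr
            exact Real.exp_le_one_iff.mpr (by nlinarith [(hlam_pos n).le])
        _ = |a n| := mul_one _
    have hsum : Summable fun n => a n * Real.exp (-lam n * t) := by
      apply Summable.of_abs
      exact ha.of_nonneg_of_le (fun n => abs_nonneg _) hexple
    have htail : x t - ∑ j ∈ Finset.range k, a j * Real.exp (-lam j * t)
        = ∑' n, a (n + k) * Real.exp (-lam (n + k) * t) := by
      rw [hx t ht, ← Summable.sum_add_tsum_nat_add k hsum]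
      ring
    have hg_le : ∀ n : ℕ, |a (n + k) * Real.exp ((lam k - lam (n + k)) * t)| ≤ |a (n + k)| := by
      intro n
      rw [abs_mul, Real.abs_exp]
      calc |a (n+k)| * Real.exp ((lam k - lam (n+k)) * t) ≤ |a (n+k)| * 1 := by
            gcongr
            apply Real.exp_le_one_iff.mpr
            have : lam k ≤ lam (n + k) := hlam_mono.monotone (Nat.le_add_left k n)
            nlinarith
        _ = |a (n+k)| := mul_one _
    have hatail : Summable fun n => |a (n + k)| := (summable_nat_add_iff k).mpr ha
    have hgsum : Summable fun n => a (n + k) * Real.exp ((lam k - lam (n + k)) * t) := by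
      apply Summable.of_abs
      exact hatail.of_nonneg_of_le (fun n => abs_nonneg _) hg_le
    have h2 : Real.exp (lam k * t) * (∑' n, a (n + k) * Real.exp (-lam (n + k) * t))
        = ∑' n, a (n + k) * Real.exp ((lam k - lam (n + k)) * t) := by
      rw [← tsum_mul_left]
      congr 1; funext n
      rw [mul_comm (a (n+k)) _, ← mul_assoc, ← Real.exp_add]
      rw [mul_comm _ (a (n+k))]
      congr 2
      ring
    have h3 : (∑' n, a (n + k) * Real.exp ((lam k - lam (n + k)) * t))
        = a k + ∑' n, a (n + 1 + k) * Real.exp ((lam k - lam (n + 1 + k)) * t) := by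
      rw [Summable.tsum_eq_zero_add hgsum]
      simp
    rw [htail, h2, h3, add_sub_cancel_left]
    -- bound the remainder tail
    have heq : ∀ n : ℕ, n + 1 + k = n + (1 + k) := fun n => by omega
    have habs_le : ∀ n : ℕ,
        |a (n + 1 + k)| * Real.exp ((lam k - lam (n + 1 + k)) * t)
          ≤ |a (n + 1 + k)| * Real.exp ((lam k - lam (k + 1)) * t) := by
      intro n
      gcongr
      · exact hlam_mono.monotone (by omega)
    have hatail' : Summable fun n => |a (n + 1 + k)| := by
      have := (summable_nat_add_iff (1 + k)).mpr ha
      simpa only [← heq] using this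
    have hrhs_sum : Summable fun n => |a (n + 1 + k)| * Real.exp ((lam k - lam (k + 1)) * t) :=
      hatail'.mul_right _
    have habs_sum : Summable fun n =>
        |a (n + 1 + k)| * Real.exp ((lam k - lam (n + 1 + k)) * t) :=
      hrhs_sum.of_nonneg_of_le (fun n => mul_nonneg (abs_nonneg _) (Real.exp_pos _).le) habs_le
    have hrw : (fun n : ℕ => |a (n + 1 + k)|) = fun n => |a (n + (1 + k))| := by
      funext n; rw [heq]
    have htail_le : (∑' n, |a (n + 1 + k)|) ≤ C := by
      rw [show (∑' n, |a (n + 1 + k)|) = ∑' n, |a (n + (1 + k))| from congrArg tsum hrw,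
        hC, ← Summable.sum_add_tsum_nat_add (1 + k) ha]
      exact le_add_of_nonneg_left (Finset.sum_nonneg fun i _ => abs_nonneg _)
    calc |∑' n, a (n + 1 + k) * Real.exp ((lam k - lam (n + 1 + k)) * t)|
        ≤ ∑' n, |a (n + 1 + k)| * Real.exp ((lam k - lam (n + 1 + k)) * t) := by
          have := norm_tsum_le_tsum_norm
            (f := fun n => a (n + 1 + k) * Real.exp ((lam k - lam (n + 1 + k)) * t))
            (by simpa [Real.norm_eq_abs, abs_mul, Real.abs_exp] using habs_sum)
          simpa [Real.norm_eq_abs, abs_mul, Real.abs_exp] using this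
      _ ≤ ∑' n, |a (n + 1 + k)| * Real.exp ((lam k - lam (k + 1)) * t) :=
          Summable.tsum_le_tsum habs_le habs_sum hrhs_sum
      _ = (∑' n, |a (n + 1 + k)|) * Real.exp ((lam k - lam (k + 1)) * t) := tsum_mul_right
      _ ≤ C * Real.exp ((lam k - lam (k + 1)) * t) := by gcongr
  have hlim : Tendsto (fun t => C * Real.exp ((lam k - lam (k+1)) * t)) atTop (nhds 0) := by
    have hneg : lam k - lam (k+1) < 0 := by
      have := hlam_mono (Nat.lt_succ_self k); linarith
    have h1 : Tendsto (fun t : ℝ => Real.exp ((lam k - lam (k+1)) * t)) atTop (nhds 0) :=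
      Real.tendsto_exp_comp_nhds_zero.mpr
        ((tendsto_const_mul_atBot_of_neg hneg).mpr tendsto_id)
    simpa using h1.const_mul C
  have hsq : Tendsto (fun t => Real.exp (lam k * t) *
      (x t - ∑ j ∈ Finset.range k, a j * Real.exp (-lam j * t)) - a k) atTop (nhds 0) := by
    apply squeeze_zero_norm' _ hlim
    filter_upwards [eventually_ge_atTop (0:ℝ)] with t ht
    simpa using key t ht
  simpa using hsq.add_const (a k)
end

section
/- Generalized Laplace principle (correctness of step 1 of the decomposition algorithm at stage k): for every k ∈ ℕ with α_k ≠ 0, the k-th residual x_k(t) := x(t) − ∑_{j=1}^{k−1} α_j e^{-λ_j t} satisfies lim_{t → ∞} −(1/t) · log|x_k(t)| = λ_k. -/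
open Filter Real Set

/-- Generalized Laplace principle at stage `k`: if `α_k ≠ 0`, then the
`k`-th residual `x_k(t) = x(t) − ∑_{j<k} α_j e^{-λ_j t}` satisfies
`lim_{t → ∞} −(1/t) log|x_k(t)| = λ_k`. -/
theorem transient_signal_generalized_laplace_principle
    (lam : ℕ → ℝ) (hlam_pos : ∀ n, 0 < lam n) (hlam_mono : StrictMono lam)
    (a : ℕ → ℝ) (ha : Summable fun n => |a n|)
    (x : ℝ → ℝ)
    (hx : ∀ t ≥ (0 : ℝ), x t = ∑' n, a n * Real.exp (-lam n * t)) :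
    ∀ k : ℕ, a k ≠ 0 →
      Tendsto
        (fun t => -(1 / t) * Real.log
          |x t - ∑ j ∈ Finset.range k, a j * Real.exp (-lam j * t)|)
        atTop (nhds (lam k)) := by
  intro k hak
  -- tail coefficients
  set R : ℝ → ℝ := fun t => ∑' n, a (n + k + 1) * Real.exp (-(lam (n + k + 1) - lam k) * t)
    with hR
  have hashift : Summable fun n => |a (n + k + 1)| := by
    have := (summable_nat_add_iff (f := fun n => |a n|) (k + 1)).2 ha
    simpa [add_assoc] using this
  -- summability of the full series for t ≥ 0
  have hsum : ∀ t : ℝ, 0 ≤ t → Summable fun n => a n * Real.exp (-lam n * t) := by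
    intro t ht
    apply Summable.of_norm_bounded ha
    intro n
    have h1 : Real.exp (-lam n * t) ≤ 1 := by
      apply Real.exp_le_one_iff.2
      have := (hlam_pos n).le
      nlinarith
    have h0 : (0:ℝ) < Real.exp (-lam n * t) := Real.exp_pos _
    rw [norm_mul, Real.norm_eq_abs, Real.norm_eq_abs, abs_of_pos h0]
    nlinarith [abs_nonneg (a n)]
  -- summability of R-series for t ≥ 0
  have hsumR : ∀ t : ℝ, 0 ≤ t →
      Summable fun n => a (n + k + 1) * Real.exp (-(lam (n + k + 1) - lam k) * t) := by
    intro t ht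
    apply Summable.of_norm_bounded hashift
    intro n
    have hlt : lam k < lam (n + k + 1) := hlam_mono (by omega)
    have h1 : Real.exp (-(lam (n + k + 1) - lam k) * t) ≤ 1 := by
      apply Real.exp_le_one_iff.2
      nlinarith
    have h0 : (0:ℝ) < Real.exp (-(lam (n + k + 1) - lam k) * t) := Real.exp_pos _
    rw [norm_mul, Real.norm_eq_abs, Real.norm_eq_abs, abs_of_pos h0]
    nlinarith [abs_nonneg (a (n + k + 1))]
  -- residual formula
  have hres : ∀ t : ℝ, 0 ≤ t →
      x t - ∑ j ∈ Finset.range k, a j * Real.exp (-lam j * t)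
        = Real.exp (-lam k * t) * (a k + R t) := by
    intro t ht
    have h1 := Summable.sum_add_tsum_nat_add k (hsum t ht)
    have h2 : Summable fun n => a (n + k) * Real.exp (-lam (n + k) * t) :=
      ((summable_nat_add_iff k).2 (hsum t ht))
    have h3 := Summable.tsum_eq_zero_add h2
    have h4 : Real.exp (-lam k * t) * R t
        = ∑' n, a (n + 1 + k) * Real.exp (-lam (n + 1 + k) * t) := by
      rw [hR]
      rw [← tsum_mul_left]
      congr 1
      ext n
      have : Real.exp (-lam k * t) * Real.exp (-(lam (n + k + 1) - lam k) * t)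
          = Real.exp (-lam (n + k + 1) * t) := by
        rw [← Real.exp_add]; ring_nf
      have hnk : n + 1 + k = n + k + 1 := by omega
      rw [hnk]
      linarith [congrArg (fun z => a (n + k + 1) * z) this]
    rw [hx t ht, ← h1]
    simp only [zero_add] at h3
    rw [h3, ← h4]
    ring
  -- R tends to 0
  have hRto : Tendsto R atTop (nhds 0) := by
    rw [tendsto_zero_iff_abs_tendsto_zero]
    set C : ℝ := ∑' n, |a (n + k + 1)| with hC
    have hδ : 0 < lam (k + 1) - lam k := by
      have := hlam_mono (Nat.lt_succ_self k); linarith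
    have hbound : ∀ t : ℝ, 0 ≤ t →
        |R t| ≤ C * Real.exp (-(lam (k + 1) - lam k) * t) := by
      intro t ht
      have hs : Summable fun n => |a (n + k + 1)| * Real.exp (-(lam (n + k + 1) - lam k) * t) := by
        apply Summable.of_nonneg_of_le (fun n => by positivity) _ hashift
        intro n
        have hlt : lam k < lam (n + k + 1) := hlam_mono (by omega)
        have h1 : Real.exp (-(lam (n + k + 1) - lam k) * t) ≤ 1 := by
          apply Real.exp_le_one_iff.2; nlinarith
        nlinarith [abs_nonneg (a (n + k + 1)), Real.exp_pos (-(lam (n + k + 1) - lam k) * t)]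
      have habs : (fun n => ‖a (n + k + 1) * Real.exp (-(lam (n + k + 1) - lam k) * t)‖)
          = fun n => |a (n + k + 1)| * Real.exp (-(lam (n + k + 1) - lam k) * t) := by
        ext n
        rw [Real.norm_eq_abs, abs_mul, abs_of_pos (Real.exp_pos _)]
      have h1 : |R t| ≤ ∑' n, |a (n + k + 1)| * Real.exp (-(lam (n + k + 1) - lam k) * t) := by
        have := norm_tsum_le_tsum_norm
          (f := fun n => a (n + k + 1) * Real.exp (-(lam (n + k + 1) - lam k) * t))
          (by rw [habs]; exact hs)
        rw [habs] at this
        simpa [hR, Real.norm_eq_abs] using this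
      have h2 : ∑' n, |a (n + k + 1)| * Real.exp (-(lam (n + k + 1) - lam k) * t)
          ≤ ∑' n, |a (n + k + 1)| * Real.exp (-(lam (k + 1) - lam k) * t) := by
        apply Summable.tsum_le_tsum _ hs (hashift.mul_right _)
        intro n
        apply mul_le_mul_of_nonneg_left _ (abs_nonneg _)
        apply Real.exp_le_exp.2
        have : lam (k + 1) ≤ lam (n + k + 1) := hlam_mono.monotone (by omega)
        nlinarith
      rw [tsum_mul_right] at h2
      exact le_trans h1 h2
    have hCnn : 0 ≤ C := tsum_nonneg fun n => abs_nonneg _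
    have hto : Tendsto (fun t : ℝ => C * Real.exp (-(lam (k + 1) - lam k) * t)) atTop (nhds 0) := by
      have : Tendsto (fun t : ℝ => Real.exp (-(lam (k + 1) - lam k) * t)) atTop (nhds 0) := by
        apply Real.tendsto_exp_atBot.comp
        exact Tendsto.const_mul_atTop_of_neg (by linarith) tendsto_id
      simpa using this.const_mul C
    apply squeeze_zero' (Filter.eventually_atTop.2 ⟨0, fun t ht => abs_nonneg _⟩)
      (Filter.eventually_atTop.2 ⟨0, fun t ht => hbound t ht⟩) hto
  -- log |a k + R t| tends to log |a k|
  have hgto : Tendsto (fun t => a k + R t) atTop (nhds (a k)) := by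
    simpa using (tendsto_const_nhds.add hRto)
  have hlogto : Tendsto (fun t => Real.log |a k + R t|) atTop (nhds (Real.log |a k|)) := by
    have hcont : ContinuousAt (fun y : ℝ => Real.log |y|) (a k) := by
      exact (Real.continuousAt_log (abs_ne_zero.2 hak)).comp (continuous_abs.continuousAt)
    exact hcont.tendsto.comp hgto
  have hdivto : Tendsto (fun t : ℝ => (1 / t) * Real.log |a k + R t|) atTop (nhds 0) := by
    have h1 : Tendsto (fun t : ℝ => 1 / t) atTop (nhds (0:ℝ)) := by
      simpa [one_div] using tendsto_inv_atTop_zero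
    simpa using h1.mul hlogto
  -- eventual equality
  have hne : ∀ᶠ t in atTop, a k + R t ≠ 0 := hgto.eventually_ne hak
  have heq : ∀ᶠ t in atTop,
      -(1 / t) * Real.log |x t - ∑ j ∈ Finset.range k, a j * Real.exp (-lam j * t)|
        = lam k - (1 / t) * Real.log |a k + R t| := by
    filter_upwards [hne, eventually_ge_atTop (1:ℝ)] with t hgne ht1
    have ht0 : (0:ℝ) < t := by linarith
    rw [hres t ht0.le, abs_mul, abs_of_pos (Real.exp_pos _),
      Real.log_mul (Real.exp_ne_zero _) (abs_ne_zero.2 hgne), Real.log_exp]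
    field_simp
    ring
  have hfinal : Tendsto (fun t : ℝ => lam k - (1 / t) * Real.log |a k + R t|)
      atTop (nhds (lam k)) := by
    simpa using tendsto_const_nhds.sub hdivto
  exact Tendsto.congr' (EventuallyEq.symm heq) hfinal
end

section
/- (Theorem 3: Correctness of the Transient Signal Decomposition Algorithm) Suppose αₖ ≠ 0 for all k ∈ ℕ. Define recursively x₁ := x, γₖ := lim_{t → ∞} −(1/t) log|xₖ(t)|, βₖ := lim_{t → ∞} e^{γₖ t} xₖ(t), and x_{k+1}(t) := xₖ(t) − βₖ e^{-γₖ t}. Then all of these limits exist and the algorithm recovers the correct parameters: γₖ = λₖ and βₖ = αₖ for every k ∈ ℕ. -/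
open Filter Real Set

set_option maxHeartbeats 1000000 in
/-- Theorem 3: Correctness of the Transient Signal Decomposition Algorithm.
Suppose `αₖ ≠ 0` for all `k`. There exist sequences `γ`, `β` and residual signals `xs`
with `xs 0 = x`, where at each stage `γₖ` is the limit of `−(1/t) log|xₖ(t)|`, `βₖ` is the
limit of `e^{γₖ t} xₖ(t)` (in particular, all these limits exist), and
`x_{k+1}(t) = xₖ(t) − βₖ e^{-γₖ t}`; moreover the algorithm recovers the correct
parameters: `γₖ = λₖ` and `βₖ = αₖ` for every `k`. -/
theorem transient_signal_algorithm_correctness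
    (lam : ℕ → ℝ) (hlam_pos : ∀ n, 0 < lam n) (hlam_mono : StrictMono lam)
    (a : ℕ → ℝ) (ha : Summable fun n => |a n|)
    (x : ℝ → ℝ)
    (hx : ∀ t ≥ (0 : ℝ), x t = ∑' n, a n * Real.exp (-lam n * t))
    (ha_ne : ∀ k, a k ≠ 0) :
    ∃ (γ β : ℕ → ℝ) (xs : ℕ → ℝ → ℝ),
      (∀ t, xs 0 t = x t) ∧
      (∀ k, Tendsto (fun t => -(1 / t) * Real.log |xs k t|) atTop (nhds (γ k))) ∧
      (∀ k, Tendsto (fun t => Real.exp (γ k * t) * xs k t) atTop (nhds (β k))) ∧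
      (∀ k t, xs (k + 1) t = xs k t - β k * Real.exp (-γ k * t)) ∧
      (∀ k, γ k = lam k ∧ β k = a k) := by
  classical
  -- summability of terms for t ≥ 0
  have hsum : ∀ t : ℝ, 0 ≤ t → Summable (fun n => a n * Real.exp (-lam n * t)) := by
    intro t ht
    apply Summable.of_norm_bounded ha
    intro n
    rw [norm_mul, Real.norm_eq_abs, Real.norm_eq_abs, Real.abs_exp]
    have : Real.exp (-lam n * t) ≤ 1 := by
      apply Real.exp_le_one_iff.mpr
      have := (hlam_pos n).le
      nlinarith
    nlinarith [abs_nonneg (a n)]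
  set F : ℕ → ℝ → ℝ := fun k t => ∑' n, a (n + k) * Real.exp (-lam (n + k) * t) with hF
  set xs : ℕ → ℝ → ℝ :=
    fun k t => x t - ∑ j ∈ Finset.range k, a j * Real.exp (-lam j * t) with hxs
  -- xs = F on [0,∞)
  have hxsF : ∀ k, ∀ t : ℝ, 0 ≤ t → xs k t = F k t := by
    intro k t ht
    have hs := hsum t ht
    have := Summable.sum_add_tsum_nat_add k hs
    simp only [hxs, hF, hx t ht]
    linarith [this]
  -- key limit: e^{λₖ t} F k t → a k
  have hBlim : ∀ k, Tendsto (fun t => Real.exp (lam k * t) * F k t) atTop (nhds (a k)) := by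
    intro k
    have hδ : lam k - lam (k + 1) < 0 := by
      have := hlam_mono (Nat.lt_succ_self k); linarith
    set C : ℝ := ∑' n, |a (n + (k + 1))| with hC
    have hsumshift : ∀ t : ℝ, 0 ≤ t →
        Summable (fun n => a (n + k) * Real.exp ((lam k - lam (n + k)) * t)) := by
      intro t ht
      have h1 : Summable (fun n => a (n + k) * Real.exp (-lam (n + k) * t)) :=
        ((summable_nat_add_iff k).2 (hsum t ht))
      have h2 := h1.mul_left (Real.exp (lam k * t))
      apply h2.congr
      intro n
      rw [mul_comm (Real.exp (lam k * t)), mul_assoc, ← Real.exp_add]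
      ring_nf
    -- rewrite, eventually in t
    have hev : ∀ᶠ t in atTop, Real.exp (lam k * t) * F k t
        = a k + ∑' n, a (n + (k + 1)) * Real.exp ((lam k - lam (n + (k + 1))) * t) := by
      filter_upwards [eventually_ge_atTop (0 : ℝ)] with t ht
      have h1 : Real.exp (lam k * t) * F k t
          = ∑' n, a (n + k) * Real.exp ((lam k - lam (n + k)) * t) := by
        rw [hF, ← tsum_mul_left]
        congr 1; funext n
        rw [mul_comm (Real.exp (lam k * t)), mul_assoc, ← Real.exp_add]
        ring_nf
      rw [h1, Summable.tsum_eq_zero_add (hsumshift t ht)]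
      congr 1
      · simp
      · congr 1; funext n
        have h2 : n + 1 + k = n + (k + 1) := by omega
        rw [h2]
    -- tail tends to 0
    have htail : Tendsto (fun t => ∑' n, a (n + (k + 1)) * Real.exp ((lam k - lam (n + (k + 1))) * t))
        atTop (nhds 0) := by
      refine squeeze_zero_norm'
        (a := fun t => C * Real.exp ((lam k - lam (k + 1)) * t)) ?_ ?_
      · filter_upwards [eventually_ge_atTop (0 : ℝ)] with t ht
        have hle : ∀ n, |a (n + (k + 1))| * Real.exp ((lam k - lam (n + (k + 1))) * t)
            ≤ |a (n + (k + 1))| * Real.exp ((lam k - lam (k + 1)) * t) := by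
          intro n
          apply mul_le_mul_of_nonneg_left _ (abs_nonneg _)
          apply Real.exp_le_exp.mpr
          have : lam (k + 1) ≤ lam (n + (k + 1)) := hlam_mono.monotone (by omega)
          nlinarith
        have hsum1 : Summable (fun n => |a (n + (k + 1))| * Real.exp ((lam k - lam (n + (k + 1))) * t)) :=
          Summable.of_nonneg_of_le (fun n => by positivity) hle
            (((summable_nat_add_iff (k + 1)).2 ha).mul_right _)
        calc ‖∑' n, a (n + (k + 1)) * Real.exp ((lam k - lam (n + (k + 1))) * t)‖
            ≤ ∑' n, ‖a (n + (k + 1)) * Real.exp ((lam k - lam (n + (k + 1))) * t)‖ :=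
              norm_tsum_le_tsum_norm (by
                apply hsum1.congr; intro n
                rw [norm_mul, Real.norm_eq_abs, Real.norm_eq_abs, Real.abs_exp])
          _ = ∑' n, |a (n + (k + 1))| * Real.exp ((lam k - lam (n + (k + 1))) * t) := by
              congr 1; funext n
              rw [norm_mul, Real.norm_eq_abs, Real.norm_eq_abs, Real.abs_exp]
          _ ≤ ∑' n, |a (n + (k + 1))| * Real.exp ((lam k - lam (k + 1)) * t) := by
              apply Summable.tsum_le_tsum _ hsum1 (((summable_nat_add_iff (k + 1)).2 ha).mul_right _)
              intro n
              apply mul_le_mul_of_nonneg_left _ (abs_nonneg _)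
              apply Real.exp_le_exp.mpr
              have : lam (k + 1) ≤ lam (n + (k + 1)) := hlam_mono.monotone (by omega)
              nlinarith
          _ = C * Real.exp ((lam k - lam (k + 1)) * t) := by rw [hC, tsum_mul_right, mul_comm]
      · have hT : Tendsto (fun t : ℝ => Real.exp ((lam k - lam (k + 1)) * t)) atTop (nhds 0) := by
          apply Real.tendsto_exp_comp_nhds_zero.mpr
          exact tendsto_id.const_mul_atTop_of_neg hδ
        have h0 : Tendsto (fun t : ℝ => C * Real.exp ((lam k - lam (k + 1)) * t)) atTop
            (nhds (C * 0)) := hT.const_mul C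
        rw [mul_zero] at h0
        exact h0
    have hadd : Tendsto (fun t : ℝ =>
        a k + ∑' n, a (n + (k + 1)) * Real.exp ((lam k - lam (n + (k + 1))) * t)) atTop
        (nhds (a k + 0)) := tendsto_const_nhds.add htail
    rw [add_zero] at hadd
    exact hadd.congr' (hev.mono fun t h => h.symm)
  -- the log limit
  have hGlim : ∀ k, Tendsto (fun t => -(1 / t) * Real.log |F k t|) atTop (nhds (lam k)) := by
    intro k
    have hlog : Tendsto (fun t => Real.log (Real.exp (lam k * t) * F k t)) atTop
        (nhds (Real.log (a k))) :=
      ((Real.continuousAt_log (ha_ne k)).tendsto).comp (hBlim k)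
    have hdiv : Tendsto (fun t => Real.log (Real.exp (lam k * t) * F k t) / t) atTop (nhds 0) :=
      Tendsto.div_atTop hlog tendsto_id
    have hne : ∀ᶠ t in atTop, Real.exp (lam k * t) * F k t ≠ 0 := by
      have : ∀ᶠ y in nhds (a k), y ≠ 0 := eventually_ne_nhds (ha_ne k)
      exact (hBlim k).eventually this
    have hev : (fun t => lam k - Real.log (Real.exp (lam k * t) * F k t) / t)
        =ᶠ[atTop] (fun t => -(1 / t) * Real.log |F k t|) := by
      filter_upwards [hne, eventually_gt_atTop (0 : ℝ)] with t h0 ht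
      have hF0 : F k t ≠ 0 := by
        intro h; apply h0; rw [h, mul_zero]
      have : Real.log (Real.exp (lam k * t) * F k t)
          = lam k * t + Real.log (F k t) := by
        rw [Real.log_mul (Real.exp_ne_zero _) hF0, Real.log_exp]
      rw [this, Real.log_abs]
      field_simp
      try ring
    have hsub : Tendsto (fun t : ℝ =>
        lam k - Real.log (Real.exp (lam k * t) * F k t) / t) atTop
        (nhds (lam k - 0)) := tendsto_const_nhds.sub hdiv
    rw [sub_zero] at hsub
    exact hsub.congr' hev
  refine ⟨lam, a, xs, ?_, ?_, ?_, ?_, fun k => ⟨rfl, rfl⟩⟩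
  · intro t; simp [hxs]
  · intro k
    apply (hGlim k).congr'
    filter_upwards [eventually_ge_atTop (0 : ℝ)] with t ht
    rw [hxsF k t ht]
  · intro k
    apply (hBlim k).congr'
    filter_upwards [eventually_ge_atTop (0 : ℝ)] with t ht
    rw [hxsF k t ht]
  · intro k t
    simp only [hxs, Finset.sum_range_succ]
    ring
end

section
/- (Theorem 1, Property 2, proper containment) If λ > 0 and λ ≠ λₙ for every n ∈ ℕ, then the decaying exponential t ↦ e^{-λ t} is not a transient signal with decay rates λ₁ < λ₂ < ⋯: there is no coefficient sequence α : ℕ → ℝ with ∑ₙ |αₙ| < ∞ such that e^{-λ t} = ∑ₙ αₙ e^{-λₙ t} for all t ≥ 0. -/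
open Filter Real Set Topology

private lemma exp_neg_mul_tendsto (d : ℝ) (hd : d < 0) :
    Tendsto (fun t : ℝ => Real.exp (d * t)) atTop (𝓝 0) :=
  Real.tendsto_exp_atBot.comp ((tendsto_const_mul_atBot_of_neg hd).2 tendsto_id)

/-- Theorem 1, Property 2, proper containment: if `μ > 0` and
`μ ≠ λₙ` for every `n`, then `t ↦ e^{-μ t}` is not a transient signal with decay
rates `λ₁ < λ₂ < ⋯`. -/
theorem decaying_exponential_not_transient
    (lam : ℕ → ℝ) (hlam_pos : ∀ n, 0 < lam n) (hlam_mono : StrictMono lam)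
    (μ : ℝ) (hμ : 0 < μ) (hμne : ∀ n, μ ≠ lam n) :
    ¬ ∃ a : ℕ → ℝ, (Summable fun n => |a n|) ∧
      ∀ t ≥ (0 : ℝ), Real.exp (-μ * t) = ∑' n, a n * Real.exp (-lam n * t) := by
  rintro ⟨a, ha, heq⟩
  -- rewrite the identity multiplied by `exp (c * t)`
  have hid : ∀ c t : ℝ, t ≥ 0 →
      (∑' n, a n * Real.exp ((c - lam n) * t)) = Real.exp ((c - μ) * t) := by
    intro c t ht
    have h1 : (∑' n, a n * Real.exp ((c - lam n) * t))
        = Real.exp (c * t) * ∑' n, a n * Real.exp (-lam n * t) := by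
      rw [← tsum_mul_left]
      congr 1; funext n
      rw [show (c - lam n) * t = c * t + -lam n * t by ring, Real.exp_add]
      ring
    rw [h1, ← heq t ht, ← Real.exp_add]
    congr 1; ring
  -- key: if all earlier coefficients vanish and `lam m < μ`, then `a m = 0`
  have key : ∀ m, (∀ k, k < m → a k = 0) → lam m < μ → a m = 0 := by
    intro m hprev hm
    have hlim : Tendsto (fun t => ∑' n, a n * Real.exp ((lam m - lam n) * t)) atTop
        (𝓝 (∑' n : ℕ, if n = m then a m else 0)) := by
      apply tendsto_tsum_of_dominated_convergence ha
      · intro n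
        rcases lt_trichotomy n m with h | h | h
        · simp [hprev n h, h.ne]
        · subst h; simp
        · simp only [if_neg (Nat.ne_of_gt h)]
          simpa using (exp_neg_mul_tendsto _ (sub_neg.2 (hlam_mono h))).const_mul (a n)
      · filter_upwards [eventually_ge_atTop (0 : ℝ)] with t ht n
        rcases lt_or_ge n m with h | h
        · simp [hprev n h]
        · rw [Real.norm_eq_abs, abs_mul, Real.abs_exp]
          have : (lam m - lam n) * t ≤ 0 :=
            mul_nonpos_of_nonpos_of_nonneg (sub_nonpos.2 (hlam_mono.monotone h)) ht
          calc |a n| * Real.exp ((lam m - lam n) * t) ≤ |a n| * 1 := by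
                exact mul_le_mul_of_nonneg_left (Real.exp_le_one_iff.2 this) (abs_nonneg _)
            _ = |a n| := mul_one _
    have hlim2 : Tendsto (fun t => ∑' n, a n * Real.exp ((lam m - lam n) * t)) atTop (𝓝 0) := by
      have : Tendsto (fun t : ℝ => Real.exp ((lam m - μ) * t)) atTop (𝓝 0) :=
        exp_neg_mul_tendsto _ (sub_neg.2 hm)
      refine this.congr' ?_
      filter_upwards [eventually_ge_atTop (0 : ℝ)] with t ht
      exact (hid (lam m) t ht).symm
    have := tendsto_nhds_unique hlim hlim2
    rwa [tsum_ite_eq m (fun _ => a m)] at this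
  by_cases hall : ∀ m, lam m < μ
  · -- all coefficients vanish, contradiction at `t = 0`
    have hz : ∀ m, a m = 0 := by
      intro m
      induction m using Nat.strong_induction_on with
      | _ m ih => exact key m ih (hall m)
    have h0 := heq 0 le_rfl
    simp [hz] at h0
  · push_neg at hall
    -- there is a least `m` with `μ < lam m`
    obtain ⟨m, hm⟩ : ∃ m, μ < lam m := by
      obtain ⟨m, hm⟩ := hall
      exact ⟨m, lt_of_le_of_ne hm (hμne m)⟩
    have hex : ∃ m, μ < lam m := ⟨m, hm⟩
    set M := Nat.find hex with hM
    have hMlt : μ < lam M := Nat.find_spec hex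
    have hprev : ∀ k, k < M → a k = 0 := by
      intro k hk
      induction k using Nat.strong_induction_on with
      | _ k ih =>
        have hklt : lam k < μ := by
          have := Nat.find_min hex hk
          exact lt_of_le_of_ne (not_lt.1 this) fun h => hμne k h.symm
        exact key k (fun j hj => ih j hj (hj.trans hk)) hklt
    -- now the sum tends to 0 but equals 1
    have hlim : Tendsto (fun t => ∑' n, a n * Real.exp ((μ - lam n) * t)) atTop
        (𝓝 (∑' _ : ℕ, (0 : ℝ))) := by
      apply tendsto_tsum_of_dominated_convergence ha
      · intro n
        rcases lt_or_ge n M with h | h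
        · simp [hprev n h]
        · have : lam M ≤ lam n := hlam_mono.monotone h
          simpa using (exp_neg_mul_tendsto _ (sub_neg.2 (hMlt.trans_le this))).const_mul (a n)
      · filter_upwards [eventually_ge_atTop (0 : ℝ)] with t ht n
        rcases lt_or_ge n M with h | h
        · simp [hprev n h]
        · rw [Real.norm_eq_abs, abs_mul, Real.abs_exp]
          have hle : μ ≤ lam n := (hMlt.trans_le (hlam_mono.monotone h)).le
          have : (μ - lam n) * t ≤ 0 :=
            mul_nonpos_of_nonpos_of_nonneg (sub_nonpos.2 hle) ht
          calc |a n| * Real.exp ((μ - lam n) * t) ≤ |a n| * 1 := by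
                exact mul_le_mul_of_nonneg_left (Real.exp_le_one_iff.2 this) (abs_nonneg _)
            _ = |a n| := mul_one _
    have hlim2 : Tendsto (fun t => ∑' n, a n * Real.exp ((μ - lam n) * t)) atTop (𝓝 1) := by
      refine tendsto_const_nhds.congr' ?_
      filter_upwards [eventually_ge_atTop (0 : ℝ)] with t ht
      rw [hid μ t ht]; simp
    have h01 := tendsto_nhds_unique hlim hlim2
    simp at h01
end
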